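/- In the autoregressive Ising broadcast process with context depth w on T(d,h), for all indices i < j the block sums satisfy E[Z_i³ Z_j] = E[Z_i Z_j³] = α·(α·q_w)^{j−i−1}·M_{d,ρ,w}(3)·(dρ)^w. -/

import Mathlib

open Finset

noncomputable section

/-- A configuration of the rooted `d`-ary tree of height `h` with values in `S`:
a vertex at level `ℓ ≤ h` is a path from the root, i.e. a function `Fin ℓ → Fin d`,
and the configuration assigns an element of `S` to every vertex. -/
abbrev TreeConfig (d h : ℕ) (S : Type) := ∀ ℓ : Fin (h + 1), (Fin ℓ.val → Fin d) → S

/-- The value at the root of the tree. -/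
def rootOf {d h : ℕ} {S : Type} (σ : TreeConfig d h S) : S :=
  σ ⟨0, Nat.succ_pos h⟩ Fin.elim0

/-- The values at the leaves (level `h`) of the tree, read as a function on root-to-leaf paths. -/
def leavesOf {d h : ℕ} {S : Type} (σ : TreeConfig d h S) : (Fin h → Fin d) → S :=
  σ ⟨h, Nat.lt_succ_self h⟩

/-- Product over all edges of the tree of an edge weight `W (parent value) (child value)`. -/
def edgeProd {S : Type} (d h : ℕ) (W : S → S → ℝ) (σ : TreeConfig d h S) : ℝ :=
  ∏ ℓ : Fin h, ∏ f : Fin (ℓ.val + 1) → Fin d,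
    W (σ ⟨ℓ.val, Nat.lt_succ_of_lt ℓ.isLt⟩ fun i => f i.castSucc)
      (σ ⟨ℓ.val + 1, Nat.succ_lt_succ ℓ.isLt⟩ f)

/-- Probability of a full configuration under the broadcast process with root prior `ν`
and broadcast channel `W`. -/
def broadcastW {S : Type} (d h : ℕ) (ν : S → ℝ) (W : S → S → ℝ) (σ : TreeConfig d h S) : ℝ :=
  ν (rootOf σ) * edgeProd d h W σ

/-- The real spin value `±1` of a Boolean spin. -/
def spinVal (b : Bool) : ℝ := if b then 1 else -1

/-- The Ising broadcast channel: copy the parent spin with probability `(1+ρ)/2`. -/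
def isingEdge (ρ : ℝ) (a b : Bool) : ℝ := if a = b then (1 + ρ) / 2 else (1 - ρ) / 2

/-- Probability of a configuration under the Ising broadcast process with uniform root. -/
def isingW (d h : ℕ) (ρ : ℝ) (σ : TreeConfig d h Bool) : ℝ :=
  broadcastW d h (fun _ => (1 : ℝ) / 2) (isingEdge ρ) σ

/-- Probability of a configuration under the Ising broadcast process with the root
conditioned to equal `r`. -/
def isingWRooted (d h : ℕ) (ρ : ℝ) (r : Bool) (σ : TreeConfig d h Bool) : ℝ :=
  (if rootOf σ = r then 1 else 0) * edgeProd d h (isingEdge ρ) σ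

/-- The sum of the `d^h` leaf spins of a configuration. -/
def leafSum (d h : ℕ) (σ : TreeConfig d h Bool) : ℝ :=
  ∑ f : Fin h → Fin d, spinVal (leavesOf σ f)

/-- Expectation of a function of the configuration under the Ising broadcast process. -/
def isingExp (d h : ℕ) (ρ : ℝ) (g : TreeConfig d h Bool → ℝ) : ℝ :=
  ∑ σ : TreeConfig d h Bool, isingW d h ρ σ * g σ

/-- `M_{d,ρ,h}(k) = E[(Σ_ℓ X_ℓ)^k | X_root = +1]`. -/
def isingMoment (d h : ℕ) (ρ : ℝ) (k : ℕ) : ℝ :=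
  ∑ σ : TreeConfig d h Bool, isingWRooted d h ρ true σ * leafSum d h σ ^ k

/-- Variance of the sum of the leaf spins under the (true) Ising broadcast process. -/
def isingVar (d h : ℕ) (ρ : ℝ) : ℝ :=
  isingExp d h ρ (fun σ => leafSum d h σ ^ 2) - isingExp d h ρ (leafSum d h) ^ 2

/-- Marginal probability of a leaf spin assignment under the Ising broadcast process. -/
def leafW (d w : ℕ) (ρ : ℝ) (y : (Fin w → Fin d) → Bool) : ℝ :=
  ∑ σ : TreeConfig d w Bool, if leavesOf σ = y then isingW d w ρ σ else 0

/-- Marginal probability of a leaf spin assignment given the root equals `r`. -/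
def leafWRooted (d w : ℕ) (ρ : ℝ) (r : Bool) (y : (Fin w → Fin d) → Bool) : ℝ :=
  ∑ σ : TreeConfig d w Bool, if leavesOf σ = y then isingWRooted d w ρ r σ else 0

/-- Posterior mean `E[X_root | X_leaves = y]` of the root spin given the leaves. -/
def rootPostMean (d w : ℕ) (ρ : ℝ) (y : (Fin w → Fin d) → Bool) : ℝ :=
  (∑ σ : TreeConfig d w Bool,
      if leavesOf σ = y then isingW d w ρ σ * spinVal (rootOf σ) else 0) / leafW d w ρ y

/-- `q_w = E[E[X_root | X_leaves]^2]` for the Ising broadcast process on `T(d,w)`. -/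
def qIsing (d w : ℕ) (ρ : ℝ) : ℝ :=
  ∑ y : (Fin w → Fin d) → Bool, leafW d w ρ y * rootPostMean d w ρ y ^ 2

/-- The law `D_m` of the height of the least common ancestor of a uniformly random
adjacent pair of depth-`w` subtrees: `P(D_m = s) = (d-1) d^{m-s} / (d^m - 1)` for `1 ≤ s ≤ m`. -/
def lcaLaw (d m : ℕ) (s : ℕ) : ℝ :=
  if 1 ≤ s ∧ s ≤ m then ((d : ℝ) - 1) * (d : ℝ) ^ (m - s) / ((d : ℝ) ^ m - 1) else 0

/-- `α = E_{s ∼ D_m}[ρ^{2s}]`. -/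
def alphaAR (d m : ℕ) (ρ : ℝ) : ℝ := ∑ s ∈ Finset.Icc 1 m, lcaLaw d m s * ρ ^ (2 * s)

/-- Joint law of the two subtree root spins when their least common ancestor is at
height `s` above them: a pair of uniform `±1` spins with correlation `ρ^{2s}`. -/
def pairRootW (ρ : ℝ) (s : ℕ) (r r' : Bool) : ℝ :=
  (1 + spinVal r * spinVal r' * ρ ^ (2 * s)) / 4

/-- One-step transition of the autoregressive Ising broadcast process: the conditional law
of the next block of `d^w` leaves given that the previous block equals `y`, averaged over a
least common ancestor height `s ∼ D_m`. -/
def arStep (d w m : ℕ) (ρ : ℝ) (y y' : (Fin w → Fin d) → Bool) : ℝ :=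
  ∑ s ∈ Finset.Icc 1 m, lcaLaw d m s *
    ((∑ r : Bool, ∑ r' : Bool,
        pairRootW ρ s r r' * leafWRooted d w ρ r y * leafWRooted d w ρ r' y') / leafW d w ρ y)

/-- Joint probability of the blocks `Y 0, …, Y (n-1)` of the autoregressive Ising
broadcast process with context depth `w`. -/
def arWeight (d w m n : ℕ) (ρ : ℝ) (Y : Fin n → ((Fin w → Fin d) → Bool)) : ℝ :=
  (if hn : 0 < n then leafW d w ρ (Y ⟨0, hn⟩) else 1) *
    ∏ i : Fin (n - 1),
      arStep d w m ρ (Y ⟨i.val, by have := i.isLt; omega⟩)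
        (Y ⟨i.val + 1, by have := i.isLt; omega⟩)

/-- Expectation of a function of the blocks under the autoregressive Ising broadcast process. -/
def arExp (d w m n : ℕ) (ρ : ℝ) (g : (Fin n → ((Fin w → Fin d) → Bool)) → ℝ) : ℝ :=
  ∑ Y : Fin n → ((Fin w → Fin d) → Bool), arWeight d w m n ρ Y * g Y

/-- The block sum `Z_i = Σ_ℓ (Y_i)_ℓ`. -/
def blockSum (d w : ℕ) (y : (Fin w → Fin d) → Bool) : ℝ :=
  ∑ f : Fin w → Fin d, spinVal (y f)

/-- The total sum `Σ_i Z_i` of all `d^h` generated spins. -/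
def arTotal (d w n : ℕ) (Y : Fin n → ((Fin w → Fin d) → Bool)) : ℝ :=
  ∑ i : Fin n, blockSum d w (Y i)

/-- Variance of the total sum of spins generated by the autoregressive Ising broadcast
process with context depth `w` on `T(d,h)`. -/
def arVar (d h w : ℕ) (ρ : ℝ) : ℝ :=
  arExp d w (h - w) (d ^ (h - w)) ρ (fun Y => arTotal d w (d ^ (h - w)) Y ^ 2)
    - arExp d w (h - w) (d ^ (h - w)) ρ (arTotal d w (d ^ (h - w))) ^ 2

/-- Second moment of the total sum of spins of the autoregressive process. -/
def arSecond (d h w : ℕ) (ρ : ℝ) : ℝ :=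
  arExp d w (h - w) (d ^ (h - w)) ρ (fun Y => arTotal d w (d ^ (h - w)) Y ^ 2)

/-- Fourth moment of the total sum of spins of the autoregressive process. -/
def arFourth (d h w : ℕ) (ρ : ℝ) : ℝ :=
  arExp d w (h - w) (d ^ (h - w)) ρ (fun Y => arTotal d w (d ^ (h - w)) Y ^ 4)

/-- `C_{d,ρ}(2) = (1 - 1/d)·dρ²/(dρ² - 1)`. -/
def C2const (d : ℕ) (ρ : ℝ) : ℝ := (1 - 1 / (d : ℝ)) * ((d : ℝ) * ρ ^ 2) / ((d : ℝ) * ρ ^ 2 - 1)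

/-- `α* = Σ_{s ≥ 1} (1 - 1/d)(1/d)^{s-1} ρ^{2s}`. -/
def alphaStar (d : ℕ) (ρ : ℝ) : ℝ :=
  ∑' s : ℕ, (1 - 1 / (d : ℝ)) * (1 / (d : ℝ)) ^ s * ρ ^ (2 * (s + 1))

/-- `A_{d,ρ}(2) = C_{d,ρ}(2) + 2α*/(1 - α* q*)`. -/
def A2const (d : ℕ) (ρ : ℝ) (qstar : ℝ) : ℝ :=
  C2const d ρ + 2 * alphaStar d ρ / (1 - alphaStar d ρ * qstar)

end

noncomputable section AuxProof

open Finset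

namespace Stmt16

variable {d h w : ℕ} {S : Type}

/-- Apply `Fin.snoc` at a level `< h+1`. -/
lemma snoc_apply_lt (τ : TreeConfig d h S) (β : (Fin (h+1) → Fin d) → S)
    (k : ℕ) (hk : k < h + 1) (hk2 : k < h + 2) :
    (Fin.snoc τ β : TreeConfig d (h+1) S) ⟨k, hk2⟩ = τ ⟨k, hk⟩ := by
  exact Fin.snoc_castSucc (α := fun ℓ : Fin (h+2) => (Fin ℓ.val → Fin d) → S) (p := τ) (x := β) (i := ⟨k, hk⟩)

lemma snoc_apply_last (τ : TreeConfig d h S) (β : (Fin (h+1) → Fin d) → S)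
    (hk2 : h + 1 < h + 2) :
    (Fin.snoc τ β : TreeConfig d (h+1) S) ⟨h+1, hk2⟩ = β := by
  exact Fin.snoc_last (α := fun ℓ : Fin (h+2) => (Fin ℓ.val → Fin d) → S) (p := τ) (x := β)

lemma rootOf_snoc (τ : TreeConfig d h S) (β : (Fin (h+1) → Fin d) → S) :
    rootOf (Fin.snoc τ β : TreeConfig d (h+1) S) = rootOf τ :=
  congrFun (snoc_apply_lt τ β 0 (Nat.succ_pos h) (Nat.succ_pos (h+1))) Fin.elim0

lemma leavesOf_snoc (τ : TreeConfig d h S) (β : (Fin (h+1) → Fin d) → S) :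
    leavesOf (Fin.snoc τ β : TreeConfig d (h+1) S) = β :=
  snoc_apply_last τ β (Nat.lt_succ_self (h+1))

lemma sum_peel [Fintype S] [DecidableEq S] (F : TreeConfig d (h+1) S → ℝ) :
    ∑ σ : TreeConfig d (h+1) S, F σ =
      ∑ β : (Fin (h+1) → Fin d) → S, ∑ τ : TreeConfig d h S, F (Fin.snoc τ β) := by
  rw [← Equiv.sum_comp (Fin.snocEquiv (fun ℓ : Fin (h+2) => (Fin ℓ.val → Fin d) → S)) F,
    Fintype.sum_prod_type]
  rfl

lemma edgeProd_snoc (W : S → S → ℝ) (τ : TreeConfig d h S) (β : (Fin (h+1) → Fin d) → S) :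
    edgeProd d (h+1) W (Fin.snoc τ β) =
      edgeProd d h W τ *
        ∏ f : Fin (h+1) → Fin d, W (leavesOf τ (fun i => f i.castSucc)) (β f) := by
  unfold edgeProd
  rw [Fin.prod_univ_castSucc]
  congr 1
  · exact Finset.prod_congr rfl fun ℓ' _ => Finset.prod_congr rfl fun f _ =>
      congrArg₂ W
        (congrFun (snoc_apply_lt τ β ℓ'.val (by omega) (by omega)) _)
        (congrFun (snoc_apply_lt τ β (ℓ'.val+1) (by omega) (by omega)) _)
  · exact Finset.prod_congr rfl fun f _ =>
      congrArg₂ W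
        (congrFun (snoc_apply_lt τ β h (by omega) (by omega)) _)
        (congrFun (snoc_apply_last τ β (by omega)) _)

/-- The height-0 tree is just a root. -/
def rootEquiv (d : ℕ) (S : Type) : S ≃ TreeConfig d 0 S where
  toFun s := fun _ _ => s
  invFun σ := rootOf σ
  left_inv s := rfl
  right_inv σ := by
    funext ℓ p
    obtain ⟨v, hv⟩ := ℓ
    have hv0 : v = 0 := by omega
    subst hv0
    exact congrArg (σ ⟨0, hv⟩) (funext fun i => i.elim0)

lemma edgeProd_zero (W : S → S → ℝ) (σ : TreeConfig d 0 S) : edgeProd d 0 W σ = 1 := by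
  simp [edgeProd]

end Stmt16
namespace Stmt16
open Finset

variable {d h w : ℕ}

lemma isingWRooted_snoc (ρ : ℝ) (r : Bool) (τ : TreeConfig d h Bool)
    (β : (Fin (h+1) → Fin d) → Bool) :
    isingWRooted d (h+1) ρ r (Fin.snoc τ β) =
      isingWRooted d h ρ r τ *
        ∏ f : Fin (h+1) → Fin d, isingEdge ρ (leavesOf τ fun i => f i.castSucc) (β f) := by
  unfold isingWRooted
  rw [rootOf_snoc, edgeProd_snoc]
  ring

lemma isingEdge_sum (ρ : ℝ) (a : Bool) : ∑ b : Bool, isingEdge ρ a b = 1 := by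
  cases a <;> · simp [Fintype.sum_bool, isingEdge]; ring

lemma isingEdge_sum_spin (ρ : ℝ) (a : Bool) :
    ∑ b : Bool, isingEdge ρ a b * spinVal b = ρ * spinVal a := by
  cases a <;> · simp [Fintype.sum_bool, isingEdge, spinVal]; ring

lemma sum_prod_edge (g : (Fin (h+1) → Fin d) → Bool → ℝ) :
    ∑ β : (Fin (h+1) → Fin d) → Bool, ∏ f, g f (β f) = ∏ f, ∑ b, g f b :=
  (Fintype.prod_sum g).symm

lemma sum_isingWRooted (ρ : ℝ) (r : Bool) :
    ∀ h, ∑ σ : TreeConfig d h Bool, isingWRooted d h ρ r σ = 1 := by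
  intro h
  induction h with
  | zero =>
    rw [← Equiv.sum_comp (rootEquiv d Bool)]
    have : ∀ s : Bool, isingWRooted d 0 ρ r (rootEquiv d Bool s) = if s = r then 1 else 0 := by
      intro s
      unfold isingWRooted
      rw [edgeProd_zero]
      simp [rootEquiv, rootOf]
      by_cases hs : s = r <;> simp [hs]
    simp [this]
  | succ h ih =>
    rw [sum_peel, Finset.sum_comm]
    have key : ∀ τ : TreeConfig d h Bool,
        ∑ β : (Fin (h+1) → Fin d) → Bool, isingWRooted d (h+1) ρ r (Fin.snoc τ β) =
          isingWRooted d h ρ r τ := by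
      intro τ
      simp only [isingWRooted_snoc]
      rw [← Finset.mul_sum, sum_prod_edge]
      rw [Finset.prod_congr rfl fun f _ => isingEdge_sum ρ _]
      simp
    rw [Finset.sum_congr rfl fun τ _ => key τ, ih]

lemma sum_isingWRooted_spin (ρ : ℝ) (r : Bool) :
    ∀ h (f : Fin h → Fin d), ∑ σ : TreeConfig d h Bool,
      isingWRooted d h ρ r σ * spinVal (leavesOf σ f) = spinVal r * ρ ^ h := by
  intro h
  induction h with
  | zero =>
    intro f
    rw [← Equiv.sum_comp (rootEquiv d Bool)]
    have : ∀ s : Bool, isingWRooted d 0 ρ r (rootEquiv d Bool s) *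
        spinVal (leavesOf (rootEquiv d Bool s) f) = (if s = r then 1 else 0) * spinVal s := by
      intro s
      unfold isingWRooted
      rw [edgeProd_zero]
      simp [rootEquiv, rootOf, leavesOf]
      by_cases hs : s = r <;> simp [hs]
    rw [Finset.sum_congr rfl fun s _ => this s]
    simp
  | succ h ih =>
    intro f
    rw [sum_peel, Finset.sum_comm]
    have key : ∀ τ : TreeConfig d h Bool,
        ∑ β : (Fin (h+1) → Fin d) → Bool,
          isingWRooted d (h+1) ρ r (Fin.snoc τ β) * spinVal (leavesOf (Fin.snoc τ β) f) =
        isingWRooted d h ρ r τ * (ρ * spinVal (leavesOf τ fun i => f i.castSucc)) := by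
      intro τ
      have e1 : ∀ β : (Fin (h+1) → Fin d) → Bool,
          isingWRooted d (h+1) ρ r (Fin.snoc τ β) * spinVal (leavesOf (Fin.snoc τ β) f) =
          isingWRooted d h ρ r τ *
            ∏ g : Fin (h+1) → Fin d,
              (isingEdge ρ (leavesOf τ fun i => g i.castSucc) (β g) *
                (if g = f then spinVal (β g) else 1)) := by
        intro β
        rw [isingWRooted_snoc, leavesOf_snoc, Finset.prod_mul_distrib]
        rw [Finset.prod_ite_eq' Finset.univ f (fun g => spinVal (β g))]
        simp [mul_assoc]
      rw [Finset.sum_congr rfl fun β _ => e1 β, ← Finset.mul_sum,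
        sum_prod_edge (fun g b => isingEdge ρ (leavesOf τ fun i => g i.castSucc) b *
          if g = f then spinVal b else 1)]
      congr 1
      have e2 : ∀ g : Fin (h+1) → Fin d,
          (∑ b : Bool, isingEdge ρ (leavesOf τ fun i => g i.castSucc) b *
            (if g = f then spinVal b else 1)) =
          (if g = f then ρ * spinVal (leavesOf τ fun i => g i.castSucc) else 1) := by
        intro g
        by_cases hg : g = f
        · simp only [hg, if_true]
          exact isingEdge_sum_spin ρ _
        · simp only [hg, if_false, mul_one]
          exact isingEdge_sum ρ _
      rw [Finset.prod_congr rfl fun g _ => e2 g,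
        Finset.prod_ite_eq' Finset.univ f (fun g => ρ * spinVal (leavesOf τ fun i => g i.castSucc))]
      simp
    rw [Finset.sum_congr rfl fun τ _ => key τ]
    have : ∀ τ : TreeConfig d h Bool,
        isingWRooted d h ρ r τ * (ρ * spinVal (leavesOf τ fun i => f i.castSucc)) =
        ρ * (isingWRooted d h ρ r τ * spinVal (leavesOf τ fun i => f i.castSucc)) := by
      intro τ; ring
    rw [Finset.sum_congr rfl fun τ _ => this τ, ← Finset.mul_sum, ih (fun i => f i.castSucc)]
    ring

lemma sum_isingWRooted_leafSum (ρ : ℝ) (r : Bool) :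
    ∑ σ : TreeConfig d w Bool, isingWRooted d w ρ r σ * leafSum d w σ =
      spinVal r * ((d : ℝ) * ρ) ^ w := by
  unfold leafSum
  simp only [Finset.mul_sum]
  rw [Finset.sum_comm]
  rw [Finset.sum_congr rfl fun f _ => sum_isingWRooted_spin ρ r w f]
  rw [Finset.sum_const]
  simp [mul_pow, Fintype.card_fun]
  ring

end Stmt16
namespace Stmt16
open Finset

variable {d w : ℕ}

/-! ### Spin flip symmetry -/

def flipC (σ : TreeConfig d w Bool) : TreeConfig d w Bool := fun ℓ p => !(σ ℓ p)

lemma flipC_involutive : Function.Involutive (flipC (d := d) (w := w)) := by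
  intro σ; funext ℓ p; simp [flipC]

lemma sum_flip (F : TreeConfig d w Bool → ℝ) : ∑ σ, F σ = ∑ σ, F (flipC σ) :=
  (Fintype.sum_bijective _ flipC_involutive.bijective F (fun σ => F (flipC σ))
    fun x => (congrArg F (flipC_involutive x)).symm)

lemma isingEdge_not (ρ : ℝ) (a b : Bool) : isingEdge ρ (!a) (!b) = isingEdge ρ a b := by
  cases a <;> cases b <;> simp [isingEdge]

lemma edgeProd_flip (ρ : ℝ) (σ : TreeConfig d w Bool) :
    edgeProd d w (isingEdge ρ) (flipC σ) = edgeProd d w (isingEdge ρ) σ := by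
  unfold edgeProd flipC
  exact Finset.prod_congr rfl fun ℓ _ => Finset.prod_congr rfl fun f _ => isingEdge_not ρ _ _

lemma rootOf_flip (σ : TreeConfig d w Bool) : rootOf (flipC σ) = !(rootOf σ) := rfl

lemma leavesOf_flip (σ : TreeConfig d w Bool) :
    leavesOf (flipC σ) = fun f => !(leavesOf σ f) := rfl

lemma spinVal_not (b : Bool) : spinVal (!b) = -spinVal b := by cases b <;> simp [spinVal]

lemma leafSum_flip (σ : TreeConfig d w Bool) : leafSum d w (flipC σ) = -leafSum d w σ := by
  unfold leafSum
  rw [← Finset.sum_neg_distrib]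
  exact Finset.sum_congr rfl fun f _ => spinVal_not _

lemma isingWRooted_flip (ρ : ℝ) (r : Bool) (σ : TreeConfig d w Bool) :
    isingWRooted d w ρ r (flipC σ) = isingWRooted d w ρ (!r) σ := by
  unfold isingWRooted
  rw [edgeProd_flip, rootOf_flip]
  congr 1
  cases r <;> cases hr : rootOf σ <;> simp [hr]

lemma sum_isingWRooted_leafSum_cube (ρ : ℝ) (r : Bool) :
    ∑ σ : TreeConfig d w Bool, isingWRooted d w ρ r σ * leafSum d w σ ^ 3 =
      spinVal r * isingMoment d w ρ 3 := by
  cases r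
  · rw [sum_flip]
    have : ∀ σ : TreeConfig d w Bool,
        isingWRooted d w ρ false (flipC σ) * leafSum d w (flipC σ) ^ 3 =
        -(isingWRooted d w ρ true σ * leafSum d w σ ^ 3) := by
      intro σ
      rw [isingWRooted_flip, leafSum_flip]
      simp only [Bool.not_false]
      ring
    rw [Finset.sum_congr rfl fun σ _ => this σ, Finset.sum_neg_distrib]
    rw [show spinVal false = (-1:ℝ) from rfl, neg_one_mul]
    rfl
  · rw [show spinVal true = (1:ℝ) from rfl, one_mul]
    rfl

/-! ### Collapsing leaf-marginal sums -/

lemma sum_leaf_collapse (F : TreeConfig d w Bool → ℝ) (ψ : ((Fin w → Fin d) → Bool) → ℝ) :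
    ∑ y : (Fin w → Fin d) → Bool,
      (∑ σ : TreeConfig d w Bool, if leavesOf σ = y then F σ else 0) * ψ y =
    ∑ σ : TreeConfig d w Bool, F σ * ψ (leavesOf σ) := by
  simp only [Finset.sum_mul, ite_mul, zero_mul]
  rw [Finset.sum_comm]
  refine Finset.sum_congr rfl fun σ _ => ?_
  rw [Finset.sum_ite_eq Finset.univ (leavesOf σ) fun y => F σ * ψ y]
  simp

lemma leafWRooted_sum_mul (ρ : ℝ) (r : Bool) (ψ : ((Fin w → Fin d) → Bool) → ℝ) :
    ∑ y, leafWRooted d w ρ r y * ψ y =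
      ∑ σ : TreeConfig d w Bool, isingWRooted d w ρ r σ * ψ (leavesOf σ) := by
  unfold leafWRooted
  exact sum_leaf_collapse _ _

lemma leafW_sum_mul (ρ : ℝ) (ψ : ((Fin w → Fin d) → Bool) → ℝ) :
    ∑ y, leafW d w ρ y * ψ y =
      ∑ σ : TreeConfig d w Bool, isingW d w ρ σ * ψ (leavesOf σ) := by
  unfold leafW
  exact sum_leaf_collapse _ _

/-- Numerator of `rootPostMean`. -/
noncomputable def Nfun (d w : ℕ) (ρ : ℝ) (y : (Fin w → Fin d) → Bool) : ℝ :=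
  ∑ σ : TreeConfig d w Bool,
    if leavesOf σ = y then isingW d w ρ σ * spinVal (rootOf σ) else 0

lemma rootPostMean_eq (ρ : ℝ) (y : (Fin w → Fin d) → Bool) :
    rootPostMean d w ρ y = Nfun d w ρ y / leafW d w ρ y := rfl

lemma Nfun_sum_mul (ρ : ℝ) (ψ : ((Fin w → Fin d) → Bool) → ℝ) :
    ∑ y, Nfun d w ρ y * ψ y =
      ∑ σ : TreeConfig d w Bool, (isingW d w ρ σ * spinVal (rootOf σ)) * ψ (leavesOf σ) := by
  unfold Nfun
  exact sum_leaf_collapse _ _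

/-! ### Pointwise root decompositions -/

lemma isingW_eq (ρ : ℝ) (σ : TreeConfig d w Bool) :
    isingW d w ρ σ =
      (isingWRooted d w ρ true σ + isingWRooted d w ρ false σ) / 2 := by
  unfold isingW isingWRooted broadcastW
  cases hr : rootOf σ <;> simp [hr] <;> ring

lemma isingW_spin (ρ : ℝ) (σ : TreeConfig d w Bool) :
    isingW d w ρ σ * spinVal (rootOf σ) =
      (isingWRooted d w ρ true σ - isingWRooted d w ρ false σ) / 2 := by
  unfold isingW isingWRooted broadcastW
  cases hr : rootOf σ <;> simp [hr, spinVal] <;> ring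

lemma leafW_eq (ρ : ℝ) (y : (Fin w → Fin d) → Bool) :
    leafW d w ρ y = (leafWRooted d w ρ true y + leafWRooted d w ρ false y) / 2 := by
  unfold leafW leafWRooted
  rw [← Finset.sum_add_distrib, Finset.sum_div]
  refine Finset.sum_congr rfl fun σ _ => ?_
  split
  · exact isingW_eq ρ σ
  · simp

lemma Nfun_eq (ρ : ℝ) (y : (Fin w → Fin d) → Bool) :
    Nfun d w ρ y = (leafWRooted d w ρ true y - leafWRooted d w ρ false y) / 2 := by
  unfold Nfun leafWRooted
  rw [← Finset.sum_sub_distrib, Finset.sum_div]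
  refine Finset.sum_congr rfl fun σ _ => ?_
  split
  · exact isingW_spin ρ σ
  · simp

/-! ### Nonnegativity -/

variable {ρ : ℝ}

lemma isingEdge_nonneg (hρ : ρ ∈ Set.Icc (0:ℝ) 1) (a b : Bool) : 0 ≤ isingEdge ρ a b := by
  obtain ⟨h0, h1⟩ := hρ
  unfold isingEdge
  split <;> linarith

lemma edgeProd_nonneg (hρ : ρ ∈ Set.Icc (0:ℝ) 1) (σ : TreeConfig d w Bool) :
    0 ≤ edgeProd d w (isingEdge ρ) σ :=
  Finset.prod_nonneg fun ℓ _ => Finset.prod_nonneg fun f _ => isingEdge_nonneg hρ _ _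

lemma isingWRooted_nonneg (hρ : ρ ∈ Set.Icc (0:ℝ) 1) (r : Bool) (σ : TreeConfig d w Bool) :
    0 ≤ isingWRooted d w ρ r σ := by
  unfold isingWRooted
  have := edgeProd_nonneg (d := d) (w := w) hρ σ
  split <;> simp [this]

lemma leafWRooted_nonneg (hρ : ρ ∈ Set.Icc (0:ℝ) 1) (r : Bool) (y : (Fin w → Fin d) → Bool) :
    0 ≤ leafWRooted d w ρ r y :=
  Finset.sum_nonneg fun σ _ => by
    split
    · exact isingWRooted_nonneg hρ r σ
    · exact le_refl 0

lemma leafWRooted_eq_zero (hρ : ρ ∈ Set.Icc (0:ℝ) 1) {y : (Fin w → Fin d) → Bool}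
    (h0 : leafW d w ρ y = 0) (r : Bool) : leafWRooted d w ρ r y = 0 := by
  have ht := leafWRooted_nonneg (d := d) (w := w) hρ true y
  have hf := leafWRooted_nonneg (d := d) (w := w) hρ false y
  have he := leafW_eq (d := d) (w := w) ρ y
  rw [h0] at he
  cases r <;> linarith

lemma Nfun_eq_zero (hρ : ρ ∈ Set.Icc (0:ℝ) 1) {y : (Fin w → Fin d) → Bool}
    (h0 : leafW d w ρ y = 0) : Nfun d w ρ y = 0 := by
  rw [Nfun_eq, leafWRooted_eq_zero hρ h0 true, leafWRooted_eq_zero hρ h0 false]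
  ring

lemma leafW_mul_post (hρ : ρ ∈ Set.Icc (0:ℝ) 1) (y : (Fin w → Fin d) → Bool) :
    leafW d w ρ y * rootPostMean d w ρ y = Nfun d w ρ y := by
  rw [rootPostMean_eq]
  by_cases h0 : leafW d w ρ y = 0
  · rw [h0, Nfun_eq_zero hρ h0]
    simp
  · field_simp

end Stmt16
namespace Stmt16
open Finset

variable {d w : ℕ} {ρ : ℝ}

/-! ### Leaf-marginal moment identities -/

lemma leafWRooted_total (ρ : ℝ) (r : Bool) :
    ∑ y, leafWRooted d w ρ r y = 1 := by
  have h1 : ∑ y, leafWRooted d w ρ r y = ∑ y, leafWRooted d w ρ r y * (fun _ => (1:ℝ)) y := by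
    simp
  rw [h1, leafWRooted_sum_mul ρ r (fun _ => (1:ℝ))]
  simpa using sum_isingWRooted (d := d) ρ r w

lemma leafWRooted_blockSum (r : Bool) :
    ∑ y, leafWRooted d w ρ r y * blockSum d w y = spinVal r * ((d:ℝ) * ρ) ^ w := by
  have := leafWRooted_sum_mul (d := d) (w := w) ρ r (blockSum d w)
  rw [this]
  exact sum_isingWRooted_leafSum ρ r

lemma leafWRooted_blockSum_cube (r : Bool) :
    ∑ y, leafWRooted d w ρ r y * blockSum d w y ^ 3 = spinVal r * isingMoment d w ρ 3 := by
  have := leafWRooted_sum_mul (d := d) (w := w) ρ r (fun y => blockSum d w y ^ 3)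
  rw [this]
  exact sum_isingWRooted_leafSum_cube ρ r

lemma sum_Nfun_mul (ψ : ((Fin w → Fin d) → Bool) → ℝ) (c₁ c₂ : ℝ)
    (h₁ : ∑ y, leafWRooted d w ρ true y * ψ y = c₁)
    (h₂ : ∑ y, leafWRooted d w ρ false y * ψ y = c₂) :
    ∑ y, Nfun d w ρ y * ψ y = (c₁ - c₂) / 2 := by
  have : ∀ y, Nfun d w ρ y * ψ y =
      (leafWRooted d w ρ true y * ψ y - leafWRooted d w ρ false y * ψ y) / 2 := by
    intro y
    rw [Nfun_eq]
    ring
  rw [Finset.sum_congr rfl fun y _ => this y, ← Finset.sum_div, Finset.sum_sub_distrib, h₁, h₂]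

lemma sum_Nfun_blockSum_cube :
    ∑ y, Nfun d w ρ y * blockSum d w y ^ 3 = isingMoment d w ρ 3 := by
  rw [sum_Nfun_mul _ _ _ (leafWRooted_blockSum_cube true) (leafWRooted_blockSum_cube false)]
  simp [spinVal]

lemma sum_Nfun_blockSum :
    ∑ y, Nfun d w ρ y * blockSum d w y = ((d:ℝ) * ρ) ^ w := by
  rw [sum_Nfun_mul _ _ _ (leafWRooted_blockSum true) (leafWRooted_blockSum false)]
  simp [spinVal]

lemma sum_Nfun_post (hρ : ρ ∈ Set.Icc (0:ℝ) 1) :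
    ∑ y, Nfun d w ρ y * rootPostMean d w ρ y = qIsing d w ρ := by
  unfold qIsing
  refine Finset.sum_congr rfl fun y _ => ?_
  rw [← leafW_mul_post hρ y]
  ring

lemma sum_Nfun_zero : ∑ y, Nfun d w ρ y = (0:ℝ) := by
  have h1 : ∑ y, Nfun d w ρ y = ∑ y, Nfun d w ρ y * (fun _ => (1:ℝ)) y := by simp
  rw [h1, sum_Nfun_mul (fun _ => (1:ℝ)) 1 1] <;>
    simp [leafWRooted_total (d := d) (w := w) ρ]

lemma sum_leafW_post (hρ : ρ ∈ Set.Icc (0:ℝ) 1) :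
    ∑ y, leafW d w ρ y * rootPostMean d w ρ y = 0 := by
  rw [Finset.sum_congr rfl fun y _ => leafW_mul_post hρ y]
  exact sum_Nfun_zero

lemma leafWRooted_post (hρ : ρ ∈ Set.Icc (0:ℝ) 1) (r : Bool) :
    ∑ y, leafWRooted d w ρ r y * rootPostMean d w ρ y = spinVal r * qIsing d w ρ := by
  have ht : ∀ y, leafWRooted d w ρ true y = leafW d w ρ y + Nfun d w ρ y := by
    intro y; rw [leafW_eq, Nfun_eq]; ring
  have hf : ∀ y, leafWRooted d w ρ false y = leafW d w ρ y - Nfun d w ρ y := by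
    intro y; rw [leafW_eq, Nfun_eq]; ring
  cases r
  · rw [Finset.sum_congr rfl fun y _ => by rw [hf y, sub_mul]]
    rw [Finset.sum_sub_distrib, sum_leafW_post hρ, sum_Nfun_post hρ]
    simp [spinVal]
  · rw [Finset.sum_congr rfl fun y _ => by rw [ht y, add_mul]]
    rw [Finset.sum_add_distrib, sum_leafW_post hρ, sum_Nfun_post hρ]
    simp [spinVal]

/-! ### lcaLaw and pairRootW -/

lemma lcaLaw_sum (hd : 2 ≤ d) {m : ℕ} (hm : 1 ≤ m) :
    ∑ s ∈ Finset.Icc 1 m, lcaLaw d m s = 1 := by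
  have hd1 : (1:ℝ) < (d:ℝ) := by exact_mod_cast (by omega : 1 < d)
  have hdm : (1:ℝ) < (d:ℝ) ^ m := one_lt_pow₀ hd1 (by omega)
  have hne1 : (d:ℝ) - 1 ≠ 0 := by linarith
  have hnem : (d:ℝ) ^ m - 1 ≠ 0 := by linarith
  have key : ∑ s ∈ Finset.Icc 1 m, ((d:ℝ)) ^ (m - s) = ((d:ℝ) ^ m - 1) / ((d:ℝ) - 1) := by
    rw [← geom_sum_eq (by linarith : (d:ℝ) ≠ 1) m]
    apply Finset.sum_bij' (fun s _ => m - s) (fun j _ => m - j)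
    · intro a ha
      simp only [Finset.mem_Icc] at ha
      simp only [Finset.mem_range]
      omega
    · intro a ha
      simp only [Finset.mem_range] at ha
      simp only [Finset.mem_Icc]
      omega
    · intro a ha
      simp only [Finset.mem_Icc] at ha
      omega
    · intro a ha
      simp only [Finset.mem_range] at ha
      omega
    · intro a ha
      rfl
  have expand : ∀ s ∈ Finset.Icc 1 m, lcaLaw d m s =
      ((d:ℝ)) ^ (m - s) * (((d:ℝ) - 1) / ((d:ℝ) ^ m - 1)) := by
    intro s hs
    simp only [Finset.mem_Icc] at hs
    unfold lcaLaw
    rw [if_pos hs]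
    ring
  rw [Finset.sum_congr rfl expand, ← Finset.sum_mul, key]
  field_simp

lemma pairRootW_sum_snd (s : ℕ) (r : Bool) : ∑ r' : Bool, pairRootW ρ s r r' = 1 / 2 := by
  cases r <;> · simp [Fintype.sum_bool, pairRootW, spinVal]; ring

lemma pairRootW_sum_fst (s : ℕ) (r' : Bool) : ∑ r : Bool, pairRootW ρ s r r' = 1 / 2 := by
  cases r' <;> · simp [Fintype.sum_bool, pairRootW, spinVal]; ring

/-! ### Bool-sum core computations -/

lemma bool_core_spin (s : ℕ) (c : ℝ) (y : (Fin w → Fin d) → Bool) :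
    ∑ r : Bool, ∑ r' : Bool,
        pairRootW ρ s r r' * leafWRooted d w ρ r y * (spinVal r' * c) =
      ρ ^ (2*s) * c * Nfun d w ρ y := by
  rw [Nfun_eq]
  simp [Fintype.sum_bool, pairRootW, spinVal]
  ring

lemma bool_core_one (s : ℕ) (y : (Fin w → Fin d) → Bool) :
    ∑ r : Bool, ∑ r' : Bool,
        pairRootW ρ s r r' * leafWRooted d w ρ r y * 1 = leafW d w ρ y := by
  rw [leafW_eq]
  simp [Fintype.sum_bool, pairRootW, spinVal]
  ring

/-! ### arStep transfer identities -/

lemma arStep_sum {m : ℕ} (ψ : ((Fin w → Fin d) → Bool) → ℝ) (v : Bool → ℝ)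
    (hψ : ∀ r', ∑ y', leafWRooted d w ρ r' y' * ψ y' = v r') (y : (Fin w → Fin d) → Bool) :
    ∑ y', arStep d w m ρ y y' * ψ y' =
      ∑ s ∈ Finset.Icc 1 m, lcaLaw d m s *
        ((∑ r : Bool, ∑ r' : Bool,
          pairRootW ρ s r r' * leafWRooted d w ρ r y * v r') / leafW d w ρ y) := by
  unfold arStep
  simp only [Finset.sum_mul]
  rw [Finset.sum_comm]
  refine Finset.sum_congr rfl fun s _ => ?_
  have step1 : ∀ y', lcaLaw d m s *
      ((∑ r : Bool, ∑ r' : Bool,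
        pairRootW ρ s r r' * leafWRooted d w ρ r y * leafWRooted d w ρ r' y') / leafW d w ρ y) *
        ψ y' =
      lcaLaw d m s *
        (((∑ r : Bool, ∑ r' : Bool,
          pairRootW ρ s r r' * leafWRooted d w ρ r y * leafWRooted d w ρ r' y') * ψ y') /
            leafW d w ρ y) := by
    intro y'; ring
  rw [Finset.sum_congr rfl fun y' _ => step1 y', ← Finset.mul_sum, ← Finset.sum_div]
  congr 2
  -- ∑ y' (∑ r ∑ r' ...) * ψ y' = ∑ r ∑ r' pair * L r y * v r'
  simp only [Finset.sum_mul]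
  rw [Finset.sum_comm]
  refine Finset.sum_congr rfl fun r _ => ?_
  rw [Finset.sum_comm]
  refine Finset.sum_congr rfl fun r' _ => ?_
  calc ∑ y', pairRootW ρ s r r' * leafWRooted d w ρ r y * leafWRooted d w ρ r' y' * ψ y'
      = pairRootW ρ s r r' * leafWRooted d w ρ r y *
          ∑ y', leafWRooted d w ρ r' y' * ψ y' := by
        rw [Finset.mul_sum]
        exact Finset.sum_congr rfl fun y' _ => by ring
    _ = pairRootW ρ s r r' * leafWRooted d w ρ r y * v r' := by rw [hψ r']

lemma arStep_sum_spin {m : ℕ} (ψ : ((Fin w → Fin d) → Bool) → ℝ) (c : ℝ)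
    (hψ : ∀ r', ∑ y', leafWRooted d w ρ r' y' * ψ y' = spinVal r' * c)
    (y : (Fin w → Fin d) → Bool) :
    ∑ y', arStep d w m ρ y y' * ψ y' =
      (∑ s ∈ Finset.Icc 1 m, lcaLaw d m s * ρ ^ (2*s)) * (c * rootPostMean d w ρ y) := by
  rw [arStep_sum ψ (fun r' => spinVal r' * c) hψ y]
  have : ∀ s ∈ Finset.Icc 1 m, lcaLaw d m s *
      ((∑ r : Bool, ∑ r' : Bool,
        pairRootW ρ s r r' * leafWRooted d w ρ r y * (spinVal r' * c)) / leafW d w ρ y) =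
      lcaLaw d m s * ρ ^ (2*s) * (c * rootPostMean d w ρ y) := by
    intro s _
    rw [bool_core_spin, rootPostMean_eq]
    ring
  rw [Finset.sum_congr rfl this, ← Finset.sum_mul]

lemma arStep_sum_one (hρ : ρ ∈ Set.Icc (0:ℝ) 1) (hd : 2 ≤ d) {m : ℕ} (hm : 1 ≤ m)
    (y : (Fin w → Fin d) → Bool) (hy : leafW d w ρ y ≠ 0) :
    ∑ y', arStep d w m ρ y y' = 1 := by
  have h1 : ∑ y', arStep d w m ρ y y' = ∑ y', arStep d w m ρ y y' * (fun _ => (1:ℝ)) y' := by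
    simp
  rw [h1, arStep_sum (fun _ => (1:ℝ)) (fun _ => 1) (fun r' => by
    simpa using leafWRooted_total (d := d) (w := w) ρ r') y]
  have : ∀ s ∈ Finset.Icc 1 m, lcaLaw d m s *
      ((∑ r : Bool, ∑ r' : Bool,
        pairRootW ρ s r r' * leafWRooted d w ρ r y * 1) / leafW d w ρ y) = lcaLaw d m s := by
    intro s _
    rw [bool_core_one, div_self hy, mul_one]
  rw [Finset.sum_congr rfl this, lcaLaw_sum hd hm]

lemma arStep_zero_right (hρ : ρ ∈ Set.Icc (0:ℝ) 1) {m : ℕ}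
    (y y' : (Fin w → Fin d) → Bool) (h0 : leafW d w ρ y' = 0) :
    arStep d w m ρ y y' = 0 := by
  unfold arStep
  refine Finset.sum_eq_zero fun s _ => ?_
  have : ∑ r : Bool, ∑ r' : Bool,
      pairRootW ρ s r r' * leafWRooted d w ρ r y * leafWRooted d w ρ r' y' = 0 := by
    refine Finset.sum_eq_zero fun r _ => Finset.sum_eq_zero fun r' _ => ?_
    rw [leafWRooted_eq_zero hρ h0 r', mul_zero]
  rw [this, zero_div, mul_zero]

lemma arStep_stationary (hρ : ρ ∈ Set.Icc (0:ℝ) 1) (hd : 2 ≤ d) {m : ℕ} (hm : 1 ≤ m)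
    (y' : (Fin w → Fin d) → Bool) :
    ∑ y, leafW d w ρ y * arStep d w m ρ y y' = leafW d w ρ y' := by
  unfold arStep
  simp only [Finset.mul_sum]
  rw [Finset.sum_comm]
  have inner : ∀ s ∈ Finset.Icc 1 m,
      ∑ y, leafW d w ρ y * (lcaLaw d m s *
        ((∑ r : Bool, ∑ r' : Bool,
          pairRootW ρ s r r' * leafWRooted d w ρ r y * leafWRooted d w ρ r' y') /
          leafW d w ρ y)) = lcaLaw d m s * leafW d w ρ y' := by
    intro s _
    have cancel : ∀ y, leafW d w ρ y * (lcaLaw d m s *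
        ((∑ r : Bool, ∑ r' : Bool,
          pairRootW ρ s r r' * leafWRooted d w ρ r y * leafWRooted d w ρ r' y') /
          leafW d w ρ y)) =
        lcaLaw d m s * (∑ r : Bool, ∑ r' : Bool,
          pairRootW ρ s r r' * leafWRooted d w ρ r y * leafWRooted d w ρ r' y') := by
      intro y
      by_cases h0 : leafW d w ρ y = 0
      · have : ∑ r : Bool, ∑ r' : Bool,
            pairRootW ρ s r r' * leafWRooted d w ρ r y * leafWRooted d w ρ r' y' = 0 := by
          refine Finset.sum_eq_zero fun r _ => Finset.sum_eq_zero fun r' _ => ?_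
          rw [leafWRooted_eq_zero hρ h0 r]
          ring
        rw [this, h0]
        simp
      · field_simp
    rw [Finset.sum_congr rfl fun y _ => cancel y, ← Finset.mul_sum]
    congr 1
    rw [Finset.sum_comm]
    have : ∀ r : Bool, ∑ y, ∑ r' : Bool,
        pairRootW ρ s r r' * leafWRooted d w ρ r y * leafWRooted d w ρ r' y' =
        ∑ r' : Bool, pairRootW ρ s r r' * leafWRooted d w ρ r' y' := by
      intro r
      rw [Finset.sum_comm]
      refine Finset.sum_congr rfl fun r' _ => ?_
      calc ∑ y, pairRootW ρ s r r' * leafWRooted d w ρ r y * leafWRooted d w ρ r' y'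
          = pairRootW ρ s r r' * leafWRooted d w ρ r' y' * ∑ y, leafWRooted d w ρ r y := by
            rw [Finset.mul_sum]
            exact Finset.sum_congr rfl fun y _ => by ring
        _ = pairRootW ρ s r r' * leafWRooted d w ρ r' y' := by
            rw [leafWRooted_total, mul_one]
      -- done
    rw [Finset.sum_congr rfl fun r _ => this r]
    rw [leafW_eq]
    simp [Fintype.sum_bool, pairRootW, spinVal]
    ring
  rw [Finset.sum_congr rfl inner, ← Finset.sum_mul, lcaLaw_sum hd hm, one_mul]

end Stmt16
namespace Stmt16
open Finset

/-- Backward chain value of a list of observables along the AR Markov kernel. -/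
noncomputable def G (d w m : ℕ) (ρ : ℝ) :
    List (((Fin w → Fin d) → Bool) → ℝ) → ((Fin w → Fin d) → Bool) → ℝ
  | [], _ => 1
  | ψ :: t, y => ∑ y', arStep d w m ρ y y' * (ψ y' * G d w m ρ t y')

variable {d w m : ℕ} {ρ : ℝ}

/-- The constant observable 1. -/
noncomputable def oneF (d w : ℕ) : ((Fin w → Fin d) → Bool) → ℝ := fun _ => 1

lemma G_nil (y : (Fin w → Fin d) → Bool) : G d w m ρ [] y = 1 := rfl

lemma G_cons (ψ : ((Fin w → Fin d) → Bool) → ℝ) (t) (y) :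
    G d w m ρ (ψ :: t) y = ∑ y', arStep d w m ρ y y' * (ψ y' * G d w m ρ t y') := rfl

lemma G_ones (hρ : ρ ∈ Set.Icc (0:ℝ) 1) (hd : 2 ≤ d) (hm : 1 ≤ m) :
    ∀ j (y : (Fin w → Fin d) → Bool), leafW d w ρ y ≠ 0 →
      G d w m ρ (List.replicate j (oneF d w)) y = 1 := by
  intro j
  induction j with
  | zero => intro y _; rfl
  | succ j ih =>
    intro y hy
    rw [List.replicate_succ, G_cons]
    have : ∀ y', arStep d w m ρ y y' * (oneF d w y' * G d w m ρ (List.replicate j (oneF d w)) y') =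
        arStep d w m ρ y y' := by
      intro y'
      by_cases h0 : leafW d w ρ y' = 0
      · rw [arStep_zero_right hρ y y' h0]
        ring
      · rw [ih y' h0]
        simp [oneF]
    rw [Finset.sum_congr rfl fun y' _ => this y', arStep_sum_one hρ hd hm y hy]

/-- Main backward recursion: ones, then an observable `ψ` with spin-odd leaf sums,
then trailing ones. -/
lemma G_tail (hρ : ρ ∈ Set.Icc (0:ℝ) 1) (hd : 2 ≤ d) (hm : 1 ≤ m)
    (ψ : ((Fin w → Fin d) → Bool) → ℝ) (c : ℝ)
    (hψ : ∀ r', ∑ y', leafWRooted d w ρ r' y' * ψ y' = spinVal r' * c) :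
    ∀ j l (y : (Fin w → Fin d) → Bool),
      G d w m ρ (List.replicate j (oneF d w) ++ ψ :: List.replicate l (oneF d w)) y =
        (∑ s ∈ Finset.Icc 1 m, lcaLaw d m s * ρ ^ (2*s)) * c *
          ((∑ s ∈ Finset.Icc 1 m, lcaLaw d m s * ρ ^ (2*s)) * qIsing d w ρ) ^ j *
          rootPostMean d w ρ y := by
  intro j
  induction j with
  | zero =>
    intro l y
    rw [List.replicate, List.nil_append, G_cons]
    have hψtot : ∀ r', ∑ y', leafWRooted d w ρ r' y' *
        (ψ y' * G d w m ρ (List.replicate l (oneF d w)) y') = spinVal r' * c := by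
      intro r'
      rw [← hψ r']
      refine Finset.sum_congr rfl fun y' _ => ?_
      by_cases h0 : leafW d w ρ y' = 0
      · rw [leafWRooted_eq_zero hρ h0 r']
        ring
      · rw [G_ones hρ hd hm l y' h0]
        ring
    rw [arStep_sum_spin _ c hψtot y]
    ring
  | succ j ih =>
    intro l y
    rw [List.replicate_succ, List.cons_append, G_cons]
    have hψtot : ∀ r', ∑ y', leafWRooted d w ρ r' y' *
        (oneF d w y' * G d w m ρ (List.replicate j (oneF d w) ++
          ψ :: List.replicate l (oneF d w)) y') =
        spinVal r' * ((∑ s ∈ Finset.Icc 1 m, lcaLaw d m s * ρ ^ (2*s)) * c *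
          ((∑ s ∈ Finset.Icc 1 m, lcaLaw d m s * ρ ^ (2*s)) * qIsing d w ρ) ^ j *
          qIsing d w ρ) := by
      intro r'
      have : ∀ y', leafWRooted d w ρ r' y' *
          (oneF d w y' * G d w m ρ (List.replicate j (oneF d w) ++
            ψ :: List.replicate l (oneF d w)) y') =
          ((∑ s ∈ Finset.Icc 1 m, lcaLaw d m s * ρ ^ (2*s)) * c *
            ((∑ s ∈ Finset.Icc 1 m, lcaLaw d m s * ρ ^ (2*s)) * qIsing d w ρ) ^ j) *
            (leafWRooted d w ρ r' y' * rootPostMean d w ρ y') := by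
        intro y'
        rw [ih l y']
        simp [oneF]
        ring
      rw [Finset.sum_congr rfl fun y' _ => this y', ← Finset.mul_sum, leafWRooted_post hρ r']
      ring
    rw [arStep_sum_spin _ _ hψtot y]
    ring

/-- Stationarity: shifting the chain start. -/
lemma G_shift (hρ : ρ ∈ Set.Icc (0:ℝ) 1) (hd : 2 ≤ d) (hm : 1 ≤ m)
    (ψ : ((Fin w → Fin d) → Bool) → ℝ) (t) :
    ∑ y, leafW d w ρ y * G d w m ρ (ψ :: t) y =
      ∑ y, leafW d w ρ y * (ψ y * G d w m ρ t y) := by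
  simp only [G_cons, Finset.mul_sum]
  rw [Finset.sum_comm]
  refine Finset.sum_congr rfl fun y' _ => ?_
  have : ∀ y, leafW d w ρ y * (arStep d w m ρ y y' * (ψ y' * G d w m ρ t y')) =
      (leafW d w ρ y * arStep d w m ρ y y') * (ψ y' * G d w m ρ t y') := by
    intro y; ring
  rw [Finset.sum_congr rfl fun y _ => this y, ← Finset.sum_mul,
    arStep_stationary hρ hd hm y']

lemma G_peel_ones (hρ : ρ ∈ Set.Icc (0:ℝ) 1) (hd : 2 ≤ d) (hm : 1 ≤ m) :
    ∀ j (t : List (((Fin w → Fin d) → Bool) → ℝ)),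
      ∑ y, leafW d w ρ y * G d w m ρ (List.replicate j (oneF d w) ++ t) y =
        ∑ y, leafW d w ρ y * G d w m ρ t y := by
  intro j
  induction j with
  | zero => intro t; rw [List.replicate, List.nil_append]
  | succ j ih =>
    intro t
    rw [List.replicate_succ, List.cons_append, G_shift hρ hd hm]
    have : ∀ y, leafW d w ρ y * (oneF d w y *
        G d w m ρ (List.replicate j (oneF d w) ++ t) y) =
        leafW d w ρ y * G d w m ρ (List.replicate j (oneF d w) ++ t) y := by
      intro y; simp [oneF]
    rw [Finset.sum_congr rfl fun y _ => this y, ih t]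

end Stmt16
namespace Stmt16
open Finset

/-- Explicit head/product form of the AR expectation of a product observable. -/
noncomputable def Hsum (d w m : ℕ) (ρ : ℝ) (k : ℕ)
    (ν : ((Fin w → Fin d) → Bool) → ℝ)
    (φ : Fin (k+1) → ((Fin w → Fin d) → Bool) → ℝ) : ℝ :=
  ∑ Y : Fin (k+1) → ((Fin w → Fin d) → Bool),
    (ν (Y 0) * ∏ i : Fin k, arStep d w m ρ (Y i.castSucc) (Y i.succ)) * ∏ i, φ i (Y i)

variable {d w m : ℕ} {ρ : ℝ}

lemma Hsum_eq : ∀ (k : ℕ) (ν : ((Fin w → Fin d) → Bool) → ℝ)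
    (φ : Fin (k+1) → ((Fin w → Fin d) → Bool) → ℝ),
    Hsum d w m ρ k ν φ =
      ∑ y, ν y * (φ 0 y * G d w m ρ (List.ofFn fun i : Fin k => φ i.succ) y) := by
  intro k
  induction k with
  | zero =>
    intro ν φ
    unfold Hsum
    rw [List.ofFn_zero]
    apply Fintype.sum_equiv (Equiv.funUnique (Fin 1) ((Fin w → Fin d) → Bool))
    intro Y
    simp [G_nil]
  | succ k ih =>
    intro ν φ
    have expand : ∀ (y₀ : (Fin w → Fin d) → Bool) (Y' : Fin (k+1) → ((Fin w → Fin d) → Bool)),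
        (ν ((Fin.cons y₀ Y' : Fin (k+2) → ((Fin w → Fin d) → Bool)) 0) *
            ∏ i : Fin (k+1), arStep d w m ρ
              ((Fin.cons y₀ Y' : Fin (k+2) → ((Fin w → Fin d) → Bool)) i.castSucc)
              ((Fin.cons y₀ Y' : Fin (k+2) → ((Fin w → Fin d) → Bool)) i.succ)) *
          ∏ i, φ i ((Fin.cons y₀ Y' : Fin (k+2) → ((Fin w → Fin d) → Bool)) i) =
        (ν y₀ * φ 0 y₀) *
          ((arStep d w m ρ y₀ (Y' 0) *
              ∏ i : Fin k, arStep d w m ρ (Y' i.castSucc) (Y' i.succ)) *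
            ∏ i : Fin (k+1), (fun j : Fin (k+2) => φ j) i.succ (Y' i)) := by
      intro y₀ Y'
      rw [Fin.prod_univ_succ (f := fun i : Fin (k+1) =>
        arStep d w m ρ ((Fin.cons y₀ Y' : Fin (k+2) → ((Fin w → Fin d) → Bool)) i.castSucc)
          ((Fin.cons y₀ Y' : Fin (k+2) → ((Fin w → Fin d) → Bool)) i.succ))]
      rw [Fin.prod_univ_succ (f := fun i : Fin (k+2) =>
        φ i ((Fin.cons y₀ Y' : Fin (k+2) → ((Fin w → Fin d) → Bool)) i))]
      simp only [Fin.castSucc_zero, Fin.cons_zero, Fin.cons_succ, ← Fin.succ_castSucc]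
      ring
    have split : Hsum d w m ρ (k+1) ν φ =
        ∑ y₀ : (Fin w → Fin d) → Bool, ∑ Y' : Fin (k+1) → ((Fin w → Fin d) → Bool),
          (ν y₀ * φ 0 y₀) *
            ((arStep d w m ρ y₀ (Y' 0) *
                ∏ i : Fin k, arStep d w m ρ (Y' i.castSucc) (Y' i.succ)) *
              ∏ i : Fin (k+1), (fun j : Fin (k+2) => φ j) i.succ (Y' i)) := by
      calc Hsum d w m ρ (k+1) ν φ
          = ∑ p : ((Fin w → Fin d) → Bool) × (Fin (k+1) → ((Fin w → Fin d) → Bool)),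
              (ν p.1 * φ 0 p.1) *
                ((arStep d w m ρ p.1 (p.2 0) *
                    ∏ i : Fin k, arStep d w m ρ (p.2 i.castSucc) (p.2 i.succ)) *
                  ∏ i : Fin (k+1), (fun j : Fin (k+2) => φ j) i.succ (p.2 i)) := by
            unfold Hsum
            exact (Fintype.sum_equiv
              (Fin.consEquiv (fun _ : Fin (k+2) => ((Fin w → Fin d) → Bool)))
              _ _ fun p => (expand p.1 p.2).symm).symm
        _ = _ := by
            rw [Fintype.sum_prod_type]
    rw [split]
    have inner : ∀ y₀ : (Fin w → Fin d) → Bool,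
        ∑ Y' : Fin (k+1) → ((Fin w → Fin d) → Bool),
          (ν y₀ * φ 0 y₀) *
            ((arStep d w m ρ y₀ (Y' 0) *
                ∏ i : Fin k, arStep d w m ρ (Y' i.castSucc) (Y' i.succ)) *
              ∏ i : Fin (k+1), (fun j : Fin (k+2) => φ j) i.succ (Y' i)) =
        (ν y₀ * φ 0 y₀) *
          Hsum d w m ρ k (fun y => arStep d w m ρ y₀ y) (fun i => φ i.succ) := by
      intro y₀
      rw [← Finset.mul_sum]
      rfl
    rw [Finset.sum_congr rfl fun y₀ _ => inner y₀]
    refine Finset.sum_congr rfl fun y₀ _ => ?_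
    rw [ih (fun y => arStep d w m ρ y₀ y) (fun i => φ i.succ)]
    rw [List.ofFn_succ (f := fun i : Fin (k+1) => φ i.succ), G_cons, Finset.mul_sum,
      Finset.mul_sum, Finset.mul_sum]
    refine Finset.sum_congr rfl fun y₁ _ => ?_
    ring

/-- Bridge from `arExp` of a product observable to `Hsum`. -/
lemma arExp_prod (k : ℕ) (φ : Fin (k+1) → ((Fin w → Fin d) → Bool) → ℝ) :
    arExp d w m (k+1) ρ (fun Y => ∏ i, φ i (Y i)) = Hsum d w m ρ k (leafW d w ρ) φ := by
  unfold arExp arWeight Hsum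
  refine Finset.sum_congr rfl fun Y _ => ?_
  rw [dif_pos (Nat.succ_pos k)]
  exact congrArg₂ (· * ·)
    (congrArg₂ (· * ·)
      (congrArg (leafW d w ρ) (congrArg Y (Fin.ext (by simp))))
      (Finset.prod_congr rfl fun i _ => congrArg₂ (arStep d w m ρ)
        (congrArg Y (Fin.ext rfl)) (congrArg Y (Fin.ext rfl))))
    rfl

/-- Factorization of a two-point observable. -/
lemma prod_two_points {n : ℕ} (a b : Fin n) (hab : a ≠ b)
    (f g : ((Fin w → Fin d) → Bool) → ℝ) (Y : Fin n → ((Fin w → Fin d) → Bool)) :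
    ∏ i, (if i = a then f else if i = b then g else oneF d w) (Y i) = f (Y a) * g (Y b) := by
  rw [← Finset.mul_prod_erase Finset.univ
    (fun i => (if i = a then f else if i = b then g else oneF d w) (Y i)) (Finset.mem_univ a)]
  rw [← Finset.mul_prod_erase ((Finset.univ).erase a)
    (fun i => (if i = a then f else if i = b then g else oneF d w) (Y i))
    (by simp [hab.symm] : b ∈ (Finset.univ).erase a)]
  have hrest : ∏ i ∈ (((Finset.univ).erase a).erase b),
      (if i = a then f else if i = b then g else oneF d w) (Y i) = 1 := by
    refine Finset.prod_eq_one fun i hi => ?_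
    simp only [Finset.mem_erase] at hi
    rw [if_neg hi.2.1, if_neg hi.1]
    rfl
  rw [hrest]
  have hb : (if b = a then f else if b = b then g else oneF d w) (Y b) = g (Y b) := by
    rw [if_neg hab.symm, if_pos rfl]
  rw [hb]
  simp

/-- The double-marked list of observables. -/
lemma ofFn_single (g : ((Fin w → Fin d) → Bool) → ℝ) :
    ∀ (n b l : ℕ), b < n → l = n - 1 - b →
      List.ofFn (fun i : Fin n => if i.val = b then g else oneF d w) =
        List.replicate b (oneF d w) ++ g :: List.replicate l (oneF d w) := by
  intro n
  induction n with
  | zero => intro b l hb _; omega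
  | succ n ih =>
    intro b l hb hl
    rw [List.ofFn_succ]
    cases b with
    | zero =>
      simp only [Fin.val_zero, if_pos rfl]
      have htail : (fun i : Fin n => if (Fin.succ i).val = 0 then g else oneF d w) =
          (fun _ : Fin n => oneF d w) := by
        funext i
        simp [Fin.val_succ]
      rw [htail, List.ofFn_const, show l = n by omega]
      simp
    | succ b' =>
      have h0 : ((0 : Fin (n+1)).val = b' + 1) = False := by simp
      simp only [h0, if_false]
      have htail : (fun i : Fin n => if (Fin.succ i).val = b' + 1 then g else oneF d w) =
          (fun i : Fin n => if i.val = b' then g else oneF d w) := by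
        funext i
        simp [Fin.val_succ]
      rw [htail, ih b' l (by omega) (by omega)]
      rw [List.replicate_succ, List.cons_append]

lemma ofFn_double (f g : ((Fin w → Fin d) → Bool) → ℝ) :
    ∀ (n a b j l : ℕ), a < b → b < n → j = b - a - 1 → l = n - 1 - b →
      List.ofFn (fun i : Fin n =>
          if i.val = a then f else if i.val = b then g else oneF d w) =
        List.replicate a (oneF d w) ++ f ::
          (List.replicate j (oneF d w) ++ g :: List.replicate l (oneF d w)) := by
  intro n
  induction n with
  | zero => intro a b j l hab hb _ _; omega
  | succ n ih =>
    intro a b j l hab hb hj hl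
    rw [List.ofFn_succ]
    cases a with
    | zero =>
      simp only [Fin.val_zero, if_pos rfl]
      have htail : (fun i : Fin n =>
          if (Fin.succ i).val = 0 then f else if (Fin.succ i).val = b then g else oneF d w) =
          (fun i : Fin n => if i.val = b - 1 then g else oneF d w) := by
        funext i
        have h1 : ((Fin.succ i).val = 0) = False := by simp [Fin.val_succ]
        have h2 : ((Fin.succ i).val = b) = (i.val = b - 1) := by
          simp only [Fin.val_succ]
          exact propext (by omega)
        simp only [h1, h2, if_false]
      rw [htail, ofFn_single g n (b-1) l (by omega) (by omega)]
      have hjb : j = b - 1 := by omega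
      subst hjb
      simp
    | succ a' =>
      have h0 : ((0 : Fin (n+1)).val = a' + 1) = False := by simp
      have h0b : ((0 : Fin (n+1)).val = b) = False := by
        simp only [Fin.val_zero]
        exact propext (iff_false_intro (by omega))
      simp only [h0, h0b, if_false]
      have htail : (fun i : Fin n =>
          if (Fin.succ i).val = a' + 1 then f
          else if (Fin.succ i).val = b then g else oneF d w) =
          (fun i : Fin n =>
          if i.val = a' then f else if i.val = b - 1 then g else oneF d w) := by
        funext i
        have h1 : ((Fin.succ i).val = a' + 1) = (i.val = a') := by
          simp only [Fin.val_succ]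
          exact propext (by omega)
        have h2 : ((Fin.succ i).val = b) = (i.val = b - 1) := by
          simp only [Fin.val_succ]
          exact propext (by omega)
        simp only [h1, h2]
      rw [htail, ih a' (b-1) j l (by omega) (by omega) (by omega) (by omega)]
      rw [List.replicate_succ, List.cons_append]

end Stmt16
namespace Stmt16
open Finset

variable {d w m : ℕ} {ρ : ℝ}

lemma final_one (hρ : ρ ∈ Set.Icc (0:ℝ) 1) (hd : 2 ≤ d) (hm : 1 ≤ m)
    (n : ℕ) (a b : Fin n) (hab : a < b)
    (f g : ((Fin w → Fin d) → Bool) → ℝ) (cg cfin : ℝ)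
    (hg : ∀ r', ∑ y', leafWRooted d w ρ r' y' * g y' = spinVal r' * cg)
    (hf : ∑ y, Nfun d w ρ y * f y = cfin) :
    arExp d w m n ρ (fun Y => f (Y a) * g (Y b)) =
      (∑ s ∈ Finset.Icc 1 m, lcaLaw d m s * ρ ^ (2*s)) * cg *
        ((∑ s ∈ Finset.Icc 1 m, lcaLaw d m s * ρ ^ (2*s)) * qIsing d w ρ) ^
          (b.val - a.val - 1) * cfin := by
  cases n with
  | zero => exact a.elim0
  | succ k =>
    have hne : a ≠ b := ne_of_lt hab
    have h1 : (fun Y : Fin (k+1) → ((Fin w → Fin d) → Bool) => f (Y a) * g (Y b)) =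
        (fun Y => ∏ i, (if i = a then f else if i = b then g else oneF d w) (Y i)) := by
      funext Y
      exact (prod_two_points a b hne f g Y).symm
    rw [h1, arExp_prod k _, Hsum_eq k _ _, ← G_shift hρ hd hm _ _,
      ← List.ofFn_succ (f := fun i : Fin (k+1) =>
        if i = a then f else if i = b then g else oneF d w)]
    have hcond : (fun i : Fin (k+1) => if i = a then f else if i = b then g else oneF d w) =
        (fun i : Fin (k+1) =>
          if i.val = a.val then f else if i.val = b.val then g else oneF d w) := by
      funext i
      simp only [Fin.ext_iff]
    rw [hcond, ofFn_double f g (k+1) a.val b.val (b.val - a.val - 1) (k - b.val)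
      hab b.isLt rfl (by omega)]
    rw [G_peel_ones hρ hd hm a.val _, G_shift hρ hd hm f _]
    have h2 : ∀ y, leafW d w ρ y * (f y *
        G d w m ρ (List.replicate (b.val - a.val - 1) (oneF d w) ++
          g :: List.replicate (k - b.val) (oneF d w)) y) =
        ((∑ s ∈ Finset.Icc 1 m, lcaLaw d m s * ρ ^ (2*s)) * cg *
          ((∑ s ∈ Finset.Icc 1 m, lcaLaw d m s * ρ ^ (2*s)) * qIsing d w ρ) ^
            (b.val - a.val - 1)) * (Nfun d w ρ y * f y) := by
      intro y
      rw [G_tail hρ hd hm g cg hg (b.val - a.val - 1) (k - b.val) y, ← leafW_mul_post hρ y]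
      ring
    rw [Finset.sum_congr rfl fun y _ => h2 y, ← Finset.mul_sum, hf]

end Stmt16

end AuxProof
/-- In the autoregressive Ising broadcast process with context depth `w`
on `T(d,h)`, for `a < b` the block sums satisfy
`E[Z_a³ Z_b] = E[Z_a Z_b³] = α (α q_w)^{b-a-1} M_{d,ρ,w}(3) (dρ)^w`. -/
theorem statement16 (d h w : ℕ) (hd : 2 ≤ d) (hw : w ≤ h) (ρ : ℝ)
    (hρ : ρ ∈ Set.Icc (0 : ℝ) 1) :
    ∀ a b : Fin (d ^ (h - w)), a < b →
      arExp d w (h - w) (d ^ (h - w)) ρ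
          (fun Y => blockSum d w (Y a) ^ 3 * blockSum d w (Y b)) =
        alphaAR d (h - w) ρ * (alphaAR d (h - w) ρ * qIsing d w ρ) ^ (b.val - a.val - 1) *
          isingMoment d w ρ 3 * ((d : ℝ) * ρ) ^ w ∧
      arExp d w (h - w) (d ^ (h - w)) ρ
          (fun Y => blockSum d w (Y a) * blockSum d w (Y b) ^ 3) =
        alphaAR d (h - w) ρ * (alphaAR d (h - w) ρ * qIsing d w ρ) ^ (b.val - a.val - 1) *
          isingMoment d w ρ 3 * ((d : ℝ) * ρ) ^ w := by
  intro a b hab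
  rcases Nat.eq_zero_or_pos (h - w) with hm0 | hm
  · exfalso
    have h1 : a.val < b.val := hab
    have h2 : b.val < d ^ (h - w) := b.isLt
    have h3 : d ^ (h - w) = 1 := by rw [hm0, pow_zero]
    omega
  · constructor
    · have key := Stmt16.final_one (ρ := ρ) hρ hd hm (d ^ (h - w)) a b hab
        (fun y => blockSum d w y ^ 3) (blockSum d w) (((d : ℝ) * ρ) ^ w)
        (isingMoment d w ρ 3)
        (fun r' => Stmt16.leafWRooted_blockSum r') Stmt16.sum_Nfun_blockSum_cube
      refine Eq.trans ?_ (key.trans ?_)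
      · rfl
      · unfold alphaAR
        ring
    · have key := Stmt16.final_one (ρ := ρ) hρ hd hm (d ^ (h - w)) a b hab
        (blockSum d w) (fun y => blockSum d w y ^ 3) (isingMoment d w ρ 3)
        (((d : ℝ) * ρ) ^ w)
        (fun r' => Stmt16.leafWRooted_blockSum_cube r') Stmt16.sum_Nfun_blockSum
      refine Eq.trans ?_ (key.trans ?_)
      · rfl
      · unfold alphaAR
        ring
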